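/- There exists a constant c_u > 0 such that for all n ≥ 1 and all x ∈ ℝ, the density f(x, n) of the sum of n i.i.d. Uniform[−1,1] random variables satisfies f(x, n) ≤ c_u / √n. -/

import Mathlib

/-- The density of the Uniform[-1,1] distribution. -/
noncomputable def unifDensity (x : ℝ) : ℝ :=
  if x ∈ Set.Icc (-1 : ℝ) 1 then 1 / 2 else 0

/-- `sumUnifDensity n` is the density of the sum of `n` i.i.d. Uniform[-1,1]
random variables, defined (for `n ≥ 1`) as the `n`-fold convolution of the
Uniform[-1,1] density with itself. -/
noncomputable def sumUnifDensity : ℕ → ℝ → ℝ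
  | 0, _ => 0
  | 1, x => unifDensity x
  | (n + 2), x => ∫ τ : ℝ, sumUnifDensity (n + 1) (x - τ) * unifDensity τ

open Real MeasureTheory Set Filter Topology

lemma sin_ge_taylor : ∀ t : ℝ, 0 ≤ t → t - t^3/6 ≤ Real.sin t := by
  have hder : ∀ x : ℝ, HasDerivAt (fun y : ℝ => Real.sin y - (y - y^3/6))
      (Real.cos x - (1 - x^2/2)) x := by
    intro x
    have h1 : HasDerivAt (fun y : ℝ => y - y^3/6) (1 - x^2/2) x := by
      have : HasDerivAt (fun y : ℝ => y - y^3/6) (1 - 3*x^2/6) x := by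
        have h := ((hasDerivAt_id x).sub (((hasDerivAt_pow 3 x)).div_const 6)); simp at h; exact h
      convert this using 1; ring
    have h := (Real.hasDerivAt_sin x).sub h1; exact h
  have hmono : Monotone (fun y : ℝ => Real.sin y - (y - y^3/6)) := by
    apply monotone_of_deriv_nonneg
    · exact fun x => (hder x).differentiableAt
    · intro x
      rw [(hder x).deriv]
      have := Real.one_sub_sq_div_two_le_cos (x := x)
      linarith
  intro t ht
  have := hmono ht
  simpa using this

lemma cos_le_taylor : ∀ t : ℝ, Real.cos t ≤ 1 - t^2/2 + t^4/24 := by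
  have hder : ∀ x : ℝ, HasDerivAt (fun y : ℝ => 1 - y^2/2 + y^4/24 - Real.cos y)
      (-x + x^3/6 + Real.sin x) x := by
    intro x
    have h1 : HasDerivAt (fun y : ℝ => 1 - y^2/2 + y^4/24) (-x + x^3/6) x := by
      have : HasDerivAt (fun y : ℝ => 1 - y^2/2 + y^4/24) (-(2*x/2) + 4*x^3/24) x := by
        have h := (((hasDerivAt_const x (1:ℝ)).sub ((hasDerivAt_pow 2 x).div_const 2)).add
          ((hasDerivAt_pow 4 x).div_const 24)); simp at h
        have h2 : HasDerivAt (fun y : ℝ => 1 - y^2/2 + y^4/24) (-x + 4*x^3/24) x := h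
        convert h2 using 1; ring
      convert this using 1; ring
    have h := h1.sub (Real.hasDerivAt_cos x); simp [sub_eq_add_neg] at h; exact h
  have key : ∀ t : ℝ, 0 ≤ t → Real.cos t ≤ 1 - t^2/2 + t^4/24 := by
    have hmono : MonotoneOn (fun y : ℝ => 1 - y^2/2 + y^4/24 - Real.cos y) (Ici 0) := by
      apply monotoneOn_of_deriv_nonneg (convex_Ici 0)
      · exact (Continuous.continuousOn (by continuity))
      · exact fun x _ => (hder x).differentiableAt.differentiableWithinAt
      · intro x hx
        rw [interior_Ici] at hx
        rw [(hder x).deriv]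
        have := sin_ge_taylor x (le_of_lt hx)
        linarith
    intro t ht
    have := hmono (self_mem_Ici) ht ht
    simp only [Real.cos_zero] at this
    linarith
  intro t
  rcases le_total 0 t with ht | ht
  · exact key t ht
  · have h := key (-t) (by linarith)
    have e : (-t)^4 = t^4 := by ring
    simp only [Real.cos_neg, neg_sq, e] at h
    exact h

lemma sin_le_taylor : ∀ t : ℝ, 0 ≤ t → Real.sin t ≤ t - t^3/6 + t^5/120 := by
  have hder : ∀ x : ℝ, HasDerivAt (fun y : ℝ => y - y^3/6 + y^5/120 - Real.sin y)
      (1 - x^2/2 + x^4/24 - Real.cos x) x := by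
    intro x
    have h1 : HasDerivAt (fun y : ℝ => y - y^3/6 + y^5/120) (1 - x^2/2 + x^4/24) x := by
      have : HasDerivAt (fun y : ℝ => y - y^3/6 + y^5/120)
          (1 - 3*x^2/6 + 5*x^4/120) x := by
        have h := (((hasDerivAt_id x).sub ((hasDerivAt_pow 3 x).div_const 6)).add
          ((hasDerivAt_pow 5 x).div_const 120)); simp at h; exact h
      convert this using 1; ring
    have h := h1.sub (Real.hasDerivAt_sin x); exact h
  have hmono : MonotoneOn (fun y : ℝ => y - y^3/6 + y^5/120 - Real.sin y) (Ici 0) := by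
    apply monotoneOn_of_deriv_nonneg (convex_Ici 0)
    · exact (Continuous.continuousOn (by continuity))
    · exact fun x _ => (hder x).differentiableAt.differentiableWithinAt
    · intro x hx
      rw [(hder x).deriv]
      have := cos_le_taylor x
      linarith
  intro t ht
  have := hmono (self_mem_Ici) ht ht
  simp only [Real.sin_zero] at this
  linarith

/-- The key bound `sin t / t ≤ 1/(1+t²/6)` on `(0, 2]`. -/
lemma sinc_le (t : ℝ) (ht : 0 < t) (ht2 : t ≤ 2) :
    Real.sin t / t ≤ (1 + t^2/6)⁻¹ := by
  have h5 := sin_le_taylor t ht.le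
  have hpos : (0:ℝ) < 1 + t^2/6 := by positivity
  have key : Real.sin t * (1 + t^2/6) ≤ t := by
    have h1 : Real.sin t * (1 + t^2/6) ≤ (t - t^3/6 + t^5/120) * (1 + t^2/6) := by
      apply mul_le_mul_of_nonneg_right _ hpos.le
      linarith
    have h2 : (t - t^3/6 + t^5/120) * (1 + t^2/6) = t - t^5*(1/36 - 1/120) + t^7/720 := by
      ring
    have h3 : t^7 = t^5 * t^2 := by ring
    have h4 : t^2 ≤ 4 := by nlinarith
    have h6 : (0:ℝ) ≤ t^5 := by positivity
    nlinarith
  rw [div_le_iff₀ ht, inv_mul_eq_div, le_div_iff₀ hpos]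
  linarith

/-- `∫_{0}^∞ (1+c t²)⁻¹ dt = π/(2√c)` for `c > 0`. -/
lemma integral_inv_one_add_mul_sq {c : ℝ} (hc : 0 < c) :
    ∫ t in Ioi (0:ℝ), (1 + c * t^2)⁻¹ = π / (2 * Real.sqrt c) := by
  have hs : 0 < Real.sqrt c := Real.sqrt_pos.mpr hc
  have h := integral_comp_mul_left_Ioi (fun x : ℝ => (1 + x^2)⁻¹) 0 hs
  simp only [mul_zero] at h
  have e : ∀ t : ℝ, (1 + (Real.sqrt c * t)^2)⁻¹ = (1 + c * t^2)⁻¹ := by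
    intro t
    rw [mul_pow, Real.sq_sqrt hc.le]
  simp only [e] at h
  rw [h, integral_Ioi_inv_one_add_sq]
  simp [Real.arctan_zero, smul_eq_mul]
  ring

/-- `∫_{2}^∞ t⁻² dt = 1/2`. -/
lemma integral_inv_sq_Ioi_two :
    ∫ t in Ioi (2:ℝ), t⁻¹ ^ 2 = 1/2 := by
  have h := integral_Ioi_rpow_of_lt (a := -2) (by norm_num) (c := 2) (by norm_num)
  have e : ∀ t ∈ Ioi (2:ℝ), t ^ (-2 : ℝ) = t⁻¹ ^ 2 := by
    intro t ht
    rw [show (-2:ℝ) = -(2:ℕ) by norm_num, Real.rpow_neg (by linarith [mem_Ioi.mp ht] : (0:ℝ) ≤ t),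
      Real.rpow_natCast, inv_pow]
  rw [setIntegral_congr_fun measurableSet_Ioi e] at h
  rw [h]
  rw [show (-2:ℝ) + 1 = -1 by norm_num, Real.rpow_neg_one]
  norm_num

lemma integral_exp_neg_mul_Ioi' {s : ℝ} (hs : 0 < s) :
    ∫ t in Ioi (0:ℝ), Real.exp (-(s * t)) = s⁻¹ := by
  have h := integral_comp_mul_left_Ioi (fun x : ℝ => Real.exp (-x)) 0 hs
  simp only [mul_zero] at h
  rw [h, integral_exp_neg_Ioi_zero, smul_eq_mul, mul_one]

lemma integrableOn_exp_neg_cos {s : ℝ} (hs : 0 < s) :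
    IntegrableOn (fun t : ℝ => Real.exp (-(s * t)) * Real.cos t) (Ioi (0:ℝ)) := by
  have hI : IntegrableOn (fun t : ℝ => Real.exp (-(s * t))) (Ioi (0:ℝ)) := by
    simpa [neg_mul] using exp_neg_integrableOn_Ioi 0 hs
  apply hI.mono'
  · exact (Continuous.aestronglyMeasurable (by continuity))
  · filter_upwards with t
    rw [norm_mul, Real.norm_eq_abs, Real.norm_eq_abs, Real.abs_exp]
    calc Real.exp (-(s*t)) * |Real.cos t| ≤ Real.exp (-(s*t)) * 1 := by
          apply mul_le_mul_of_nonneg_left (Real.abs_cos_le_one t) (Real.exp_nonneg _)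
      _ = Real.exp (-(s*t)) := mul_one _

lemma integral_exp_neg_mul_cos {s : ℝ} (hs : 0 < s) :
    ∫ t in Ioi (0:ℝ), Real.exp (-(s * t)) * Real.cos t = s / (1 + s^2) := by
  have hne : (1 + s^2) ≠ 0 := by positivity
  have hderiv : ∀ t : ℝ, HasDerivAt
      (fun y : ℝ => Real.exp (-(s * y)) * (Real.sin y - s * Real.cos y) / (1 + s^2))
      (Real.exp (-(s * t)) * Real.cos t) t := by
    intro t
    have h1 : HasDerivAt (fun y : ℝ => Real.exp (-(s * y))) (-s * Real.exp (-(s*t))) t := by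
      have : HasDerivAt (fun y : ℝ => -(s * y)) (-s) t := by
        have h := ((hasDerivAt_id t).const_mul s).neg; simp at h; exact h
      have h := (Real.hasDerivAt_exp (-(s*t))).comp t this; simp [mul_comm] at h; rw [neg_mul]; exact h
    have h2 : HasDerivAt (fun y : ℝ => Real.sin y - s * Real.cos y)
        (Real.cos t + s * Real.sin t) t := by
      have := (Real.hasDerivAt_sin t).sub ((Real.hasDerivAt_cos t).const_mul s)
      simp [mul_comm, sub_neg_eq_add] at this; exact this
    have h3 := (h1.mul h2).div_const (1 + s^2)
    refine h3.congr_deriv ?_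
    field_simp
    ring
  have htend : Tendsto
      (fun y : ℝ => Real.exp (-(s * y)) * (Real.sin y - s * Real.cos y) / (1 + s^2))
      atTop (𝓝 0) := by
    apply squeeze_zero_norm (a := fun y : ℝ => Real.exp (-(s * y)) * (1 + s) / (1 + s^2))
    · intro y
      rw [norm_div, norm_mul, Real.norm_eq_abs, Real.norm_eq_abs, Real.abs_exp,
        Real.norm_eq_abs, abs_of_pos (by positivity : (0:ℝ) < 1 + s^2)]
      apply div_le_div_of_nonneg_right _ (by positivity)
      apply mul_le_mul_of_nonneg_left _ (Real.exp_nonneg _)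
      calc |Real.sin y - s * Real.cos y| ≤ |Real.sin y| + |s * Real.cos y| := abs_sub _ _
        _ ≤ 1 + s := by
            have h1 := Real.abs_sin_le_one y
            have h2 : |s * Real.cos y| ≤ s := by
              rw [abs_mul, abs_of_pos hs]
              nlinarith [Real.abs_cos_le_one y]
            linarith
    · have h0 : Tendsto (fun y : ℝ => Real.exp (-(s * y))) atTop (𝓝 0) := by
        have : Tendsto (fun y : ℝ => s * y) atTop atTop :=
          Tendsto.const_mul_atTop hs tendsto_id
        exact Real.tendsto_exp_neg_atTop_nhds_zero.comp this
      have := (h0.mul_const (1 + s)).div_const (1 + s^2)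
      simpa using this
  have := integral_Ioi_of_hasDerivAt_of_tendsto' (f' := fun t => Real.exp (-(s*t)) * Real.cos t)
      (fun t _ => hderiv t) (integrableOn_exp_neg_cos hs) htend
  rw [this]
  simp [Real.sin_zero, Real.cos_zero]
  field_simp

lemma integral_mul_exp_neg_mul_Ioi' {t : ℝ} (ht : 0 < t) :
    ∫ s in Ioi (0:ℝ), s * Real.exp (-(t * s)) = (t⁻¹)^2 := by
  have h := Real.integral_rpow_mul_exp_neg_mul_Ioi (a := 2) (r := t) (by norm_num) ht
  have e : ∀ x ∈ Ioi (0:ℝ), x ^ ((2:ℝ) - 1) * Real.exp (-(t * x)) = x * Real.exp (-(t * x)) := by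
    intro x hx
    rw [show (2:ℝ) - 1 = 1 by norm_num, Real.rpow_one]
  rw [setIntegral_congr_fun measurableSet_Ioi e] at h
  rw [h]
  have hg : Real.Gamma 2 = 1 := by
    rw [show (2:ℝ) = 1+1 by norm_num, Real.Gamma_add_one one_ne_zero, Real.Gamma_one, one_mul]
  rw [hg, mul_one, show ((2:ℝ)) = ((2:ℕ):ℝ) by norm_num, Real.rpow_natCast, one_div, inv_pow]

lemma integrableOn_one_sub_cos_exp {s : ℝ} (hs : 0 < s) :
    IntegrableOn (fun t : ℝ => (1 - Real.cos t) * Real.exp (-(s * t))) (Ioi (0:ℝ)) := by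
  have hI : IntegrableOn (fun t : ℝ => Real.exp (-(s * t))) (Ioi (0:ℝ)) := by
    simpa [neg_mul] using exp_neg_integrableOn_Ioi 0 hs
  apply (hI.const_mul 2).mono'
  · exact (Continuous.aestronglyMeasurable (by continuity))
  · filter_upwards with t
    rw [norm_mul, Real.norm_eq_abs, Real.norm_eq_abs, Real.abs_exp]
    have h1 : |1 - Real.cos t| ≤ 2 := by
      rw [abs_le]; constructor <;> nlinarith [Real.neg_one_le_cos t, Real.cos_le_one t]
    calc |1 - Real.cos t| * Real.exp (-(s*t)) ≤ 2 * Real.exp (-(s*t)) :=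
          mul_le_mul_of_nonneg_right h1 (Real.exp_nonneg _)
      _ = 2 * Real.exp (-(s*t)) := rfl

lemma integral_one_sub_cos_exp {s : ℝ} (hs : 0 < s) :
    ∫ t in Ioi (0:ℝ), (1 - Real.cos t) * Real.exp (-(s * t)) = (1 + s^2)⁻¹ / s := by
  have hI : IntegrableOn (fun t : ℝ => Real.exp (-(s * t))) (Ioi (0:ℝ)) := by
    simpa [neg_mul] using exp_neg_integrableOn_Ioi 0 hs
  have e : ∀ t : ℝ, (1 - Real.cos t) * Real.exp (-(s*t))
      = Real.exp (-(s*t)) - Real.exp (-(s*t)) * Real.cos t := by intro t; ring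
  simp_rw [e]
  rw [integral_sub hI (integrableOn_exp_neg_cos hs), integral_exp_neg_mul_Ioi' hs,
    integral_exp_neg_mul_cos hs]
  field_simp
  ring

/-- The key improper integral `∫₀^∞ (1 - cos t)/t² dt = π/2`. -/
lemma integral_one_sub_cos_div_sq : ∫ t in Ioi (0:ℝ), (1 - Real.cos t) * (t⁻¹)^2 = π / 2 := by
  set μ := volume.restrict (Ioi (0:ℝ)) with hμ
  set F : ℝ → ℝ → ℝ := fun s t => (1 - Real.cos t) * (s * Real.exp (-(s * t))) with hF
  have hFmeas : AEStronglyMeasurable (Function.uncurry F) (μ.prod μ) :=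
    (Continuous.aestronglyMeasurable (by fun_prop))
  have hslice : ∀ s : ℝ, 0 < s → Integrable (F s) μ := by
    intro s hs
    have h := (integrableOn_one_sub_cos_exp hs).const_mul s
    apply h.congr
    filter_upwards with t
    simp only [hF]; ring
  have hnormint : ∀ s : ℝ, 0 < s → ∫ t, ‖F s t‖ ∂μ = (1 + s^2)⁻¹ := by
    intro s hs
    have hnn : ∀ t : ℝ, ‖F s t‖ = s * ((1 - Real.cos t) * Real.exp (-(s * t))) := by
      intro t
      rw [Real.norm_eq_abs, abs_of_nonneg]
      · ring
      · have h1 : (0:ℝ) ≤ 1 - Real.cos t := by nlinarith [Real.cos_le_one t]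
        have h2 : (0:ℝ) ≤ s * Real.exp (-(s*t)) := by positivity
        exact mul_nonneg h1 h2
    simp_rw [hnn]
    rw [MeasureTheory.integral_const_mul, integral_one_sub_cos_exp hs]
    field_simp
  have hint : Integrable (Function.uncurry F) (μ.prod μ) := by
    rw [MeasureTheory.integrable_prod_iff hFmeas]
    constructor
    · filter_upwards [ae_restrict_mem measurableSet_Ioi] with s hs
      exact hslice s hs
    · apply (integrable_inv_one_add_sq.restrict (s := Ioi 0)).congr
      filter_upwards [ae_restrict_mem measurableSet_Ioi] with s hs
      exact (hnormint s hs).symm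
  have hswap := MeasureTheory.integral_integral_swap hint
  -- LHS : ∫ s ∫ t F = π/2
  have hlhs : ∫ s, ∫ t, F s t ∂μ ∂μ = π / 2 := by
    have : ∀ᵐ s ∂μ, ∫ t, F s t ∂μ = (1 + s^2)⁻¹ := by
      filter_upwards [ae_restrict_mem measurableSet_Ioi] with s hs
      have : ∫ t, F s t ∂μ = s * ∫ t in Ioi (0:ℝ), (1 - Real.cos t) * Real.exp (-(s * t)) := by
        rw [← MeasureTheory.integral_const_mul]
        apply integral_congr_ae
        filter_upwards with t
        simp only [hF]; ring
      rw [this, integral_one_sub_cos_exp (mem_Ioi.mp hs), mul_comm,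
        div_mul_cancel₀ _ (mem_Ioi.mp hs).ne']
    rw [integral_congr_ae this, hμ, integral_Ioi_inv_one_add_sq]
    simp [Real.arctan_zero]
  -- RHS : ∫ t ∫ s F = target
  have hrhs : ∫ t, ∫ s, F s t ∂μ ∂μ = ∫ t in Ioi (0:ℝ), (1 - Real.cos t) * (t⁻¹)^2 := by
    apply integral_congr_ae
    filter_upwards [ae_restrict_mem measurableSet_Ioi] with t ht
    have : ∫ s, F s t ∂μ = (1 - Real.cos t) * ∫ s in Ioi (0:ℝ), s * Real.exp (-(t * s)) := by
      rw [← MeasureTheory.integral_const_mul]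
      apply integral_congr_ae
      filter_upwards with s
      simp only [hF, mul_comm s t]
    rw [this, integral_mul_exp_neg_mul_Ioi' (mem_Ioi.mp ht)]
  rw [← hrhs, ← hswap, hlhs]

lemma integrableOn_inv_sq_Ioi {c : ℝ} (hc : 0 < c) :
    IntegrableOn (fun t : ℝ => (t⁻¹) ^ 2) (Ioi c) := by
  have h := integrableOn_Ioi_rpow_of_lt (a := -2) (by norm_num) hc
  apply h.congr_fun _ measurableSet_Ioi
  intro t ht
  show t ^ (-2:ℝ) = t⁻¹ ^ 2
  rw [show (-2:ℝ) = -(2:ℕ) by norm_num, Real.rpow_neg (by linarith [mem_Ioi.mp ht] : (0:ℝ) ≤ t),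
    Real.rpow_natCast, inv_pow]

lemma integrableOn_one_sub_cos (a : ℝ) :
    IntegrableOn (fun t : ℝ => (1 - Real.cos (a * t)) * (t⁻¹)^2) (Ioi (0:ℝ)) := by
  have h1 : IntegrableOn (fun t : ℝ => (1 - Real.cos (a * t)) * (t⁻¹)^2) (Ioc (0:ℝ) 1) := by
    apply Integrable.mono' (g := fun _ : ℝ => a^2/2)
    · exact integrableOn_const (by simp)
    · exact Measurable.aestronglyMeasurable (by fun_prop)
    · filter_upwards [ae_restrict_mem measurableSet_Ioc] with t ht
      have h0 : 0 < t := ht.1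
      have h1' : t ≤ 1 := ht.2
      have hcos : 1 - Real.cos (a*t) ≤ (a*t)^2/2 := by
        have := Real.one_sub_sq_div_two_le_cos (x := a*t)
        linarith
      have hnn : 0 ≤ 1 - Real.cos (a*t) := by nlinarith [Real.cos_le_one (a*t)]
      rw [Real.norm_eq_abs, abs_of_nonneg (by positivity)]
      calc (1 - Real.cos (a*t)) * (t⁻¹)^2 ≤ (a*t)^2/2 * (t⁻¹)^2 := by
            apply mul_le_mul_of_nonneg_right hcos (by positivity)
        _ = a^2/2 * (t * t⁻¹)^2 := by ring
        _ = a^2/2 := by rw [mul_inv_cancel₀ h0.ne']; ring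
  have h2 : IntegrableOn (fun t : ℝ => (1 - Real.cos (a * t)) * (t⁻¹)^2) (Ioi (1:ℝ)) := by
    apply Integrable.mono' ((integrableOn_inv_sq_Ioi one_pos).const_mul 2)
    · exact Measurable.aestronglyMeasurable (by fun_prop)
    · filter_upwards [ae_restrict_mem measurableSet_Ioi] with t ht
      have hnn : 0 ≤ 1 - Real.cos (a*t) := by nlinarith [Real.cos_le_one (a*t)]
      have h2' : 1 - Real.cos (a*t) ≤ 2 := by nlinarith [Real.neg_one_le_cos (a*t)]
      rw [Real.norm_eq_abs, abs_of_nonneg (by positivity)]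
      exact mul_le_mul_of_nonneg_right h2' (by positivity)
  have : Ioi (0:ℝ) = Ioc (0:ℝ) 1 ∪ Ioi 1 := (Ioc_union_Ioi_eq_Ioi one_pos.le).symm
  rw [IntegrableOn, this]
  exact h1.union h2

lemma integral_one_sub_cos_mul (a : ℝ) :
    ∫ t in Ioi (0:ℝ), (1 - Real.cos (a * t)) * (t⁻¹)^2 = π * |a| / 2 := by
  have key : ∀ b : ℝ, 0 < b → ∫ t in Ioi (0:ℝ), (1 - Real.cos (b * t)) * (t⁻¹)^2 = π * b / 2 := by
    intro b hb
    have h := integral_comp_mul_left_Ioi (fun u : ℝ => (1 - Real.cos u) * (u⁻¹)^2) 0 hb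
    simp only [mul_zero] at h
    rw [integral_one_sub_cos_div_sq] at h
    have e : ∀ t : ℝ, (1 - Real.cos (b * t)) * (t⁻¹)^2
        = b^2 * ((1 - Real.cos (b * t)) * (((b*t)⁻¹))^2) := by
      intro t
      by_cases htz : t = 0
      · simp [htz]
      · rw [mul_inv]
        field_simp
    simp_rw [e]
    rw [MeasureTheory.integral_const_mul, h, smul_eq_mul]
    field_simp
  rcases lt_trichotomy a 0 with ha | ha | ha
  · have e : ∀ t : ℝ, (1 - Real.cos (a * t)) * (t⁻¹)^2
        = (1 - Real.cos ((-a) * t)) * (t⁻¹)^2 := by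
      intro t
      rw [show (-a) * t = -(a*t) by ring, Real.cos_neg]
    simp_rw [e]
    rw [key (-a) (by linarith), abs_of_neg ha]
  · simp [ha]
  · rw [key a ha, abs_of_pos ha]

/-- The Fejér-type integral. -/
lemma fejer_integral (x : ℝ) :
    ∫ t in Ioi (0:ℝ), Real.cos (x * t) * (Real.sin t / t)^2
      = π * (|x + 2| + |x - 2| - 2 * |x|) / 8 := by
  have key : ∀ t ∈ Ioi (0:ℝ), Real.cos (x * t) * (Real.sin t / t)^2 =
      (1/4) * ((1 - Real.cos ((x+2) * t)) * (t⁻¹)^2 + (1 - Real.cos ((x-2) * t)) * (t⁻¹)^2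
        - 2 * ((1 - Real.cos (x * t)) * (t⁻¹)^2)) := by
    intro t ht
    have htne : t ≠ 0 := (mem_Ioi.mp ht).ne'
    have e1 : (x+2) * t = x*t + 2*t := by ring
    have e2 : (x-2) * t = x*t - 2*t := by ring
    rw [e1, e2, Real.cos_add, Real.cos_sub, show (2:ℝ)*t = 2*t from rfl]
    have hc2 : Real.cos (2*t) = 1 - 2 * Real.sin t^2 := by
      rw [Real.cos_two_mul]
      nlinarith [Real.sin_sq_add_cos_sq t]
    rw [hc2]
    field_simp
    ring
  rw [setIntegral_congr_fun measurableSet_Ioi key]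
  rw [MeasureTheory.integral_const_mul]
  have hA := integrableOn_one_sub_cos (x+2)
  have hB := integrableOn_one_sub_cos (x-2)
  have hC := (integrableOn_one_sub_cos x).const_mul 2
  have hAB : IntegrableOn (fun t : ℝ => (1 - Real.cos ((x+2)*t))*(t⁻¹)^2
      + (1 - Real.cos ((x-2)*t))*(t⁻¹)^2) (Ioi (0:ℝ)) := hA.add hB
  rw [integral_sub hAB hC, integral_add hA hB, MeasureTheory.integral_const_mul,
    integral_one_sub_cos_mul, integral_one_sub_cos_mul, integral_one_sub_cos_mul]
  ring

lemma sumUnifDensity_two (x : ℝ) : sumUnifDensity 2 x = max (2 - |x|) 0 / 4 := by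
  have e : ∀ τ : ℝ, unifDensity (x - τ) * unifDensity τ
      = Set.indicator (Icc (x-1) (x+1) ∩ Icc (-1:ℝ) 1) (fun _ => (1/4:ℝ)) τ := by
    intro τ
    rw [unifDensity, unifDensity, Set.indicator_apply]
    by_cases h1 : x - τ ∈ Icc (-1:ℝ) 1 <;> by_cases h2 : τ ∈ Icc (-1:ℝ) 1
    · rw [if_pos h1, if_pos h2, if_pos]
      · norm_num
      · refine ⟨?_, h2⟩
        rw [mem_Icc] at h1 ⊢
        exact ⟨by linarith [h1.1, h1.2], by linarith [h1.1, h1.2]⟩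
    · rw [if_pos h1, if_neg h2, if_neg]
      · ring
      · rintro ⟨_, hc⟩; exact h2 hc
    · rw [if_neg h1, if_pos h2, if_neg]
      · ring
      · rintro ⟨hc, _⟩
        rw [mem_Icc] at hc h1
        exact h1 ⟨by linarith [hc.1, hc.2], by linarith [hc.1, hc.2]⟩
    · rw [if_neg h1, if_neg h2, if_neg]
      · ring
      · rintro ⟨_, hc⟩; exact h2 hc
  have h0 : sumUnifDensity 2 x = ∫ τ : ℝ, unifDensity (x - τ) * unifDensity τ := rfl
  rw [h0]
  simp_rw [e]
  rw [MeasureTheory.integral_indicator (measurableSet_Icc.inter measurableSet_Icc),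
    setIntegral_const, Icc_inter_Icc, measureReal_def, Real.volume_Icc, smul_eq_mul]
  have hd : min (x+1) 1 - max (x-1) (-1) = 2 - |x| := by
    rcases le_total x 0 with hx | hx
    · rw [min_eq_left (by linarith), max_eq_right (by linarith), abs_of_nonpos hx]; ring
    · rw [min_eq_right (by linarith), max_eq_left (by linarith), abs_of_nonneg hx]; ring
  rw [hd, ENNReal.toReal_ofReal']
  ring

lemma max_eq_abs_form (x : ℝ) :
    max (2 - |x|) 0 / 4 = (|x + 2| + |x - 2| - 2 * |x|) / 8 := by
  rcases max_cases (2 - |x|) 0 with ⟨h1, h2⟩ | ⟨h1, h2⟩ <;>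
  rcases abs_cases x with ⟨e3, f3⟩ | ⟨e3, f3⟩ <;>
  rcases abs_cases (x+2) with ⟨e1, f1⟩ | ⟨e1, f1⟩ <;>
  rcases abs_cases (x-2) with ⟨e2, f2⟩ | ⟨e2, f2⟩ <;>
  rw [h1, e1, e2] <;> simp only [e3] at h2 ⊢ <;> linarith

noncomputable def sincInt (n : ℕ) (x : ℝ) : ℝ :=
  (1/π) * ∫ t in Ioi (0:ℝ), Real.cos (x*t) * (Real.sin t / t)^n

lemma abs_sinc_le_one (t : ℝ) : |Real.sin t / t| ≤ 1 := by
  rcases eq_or_ne t 0 with rfl | ht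
  · simp
  · rw [abs_div, div_le_one (abs_pos.mpr ht)]
    exact Real.abs_sin_le_abs

lemma abs_sinc_le_inv (t : ℝ) (ht : 0 < t) : |Real.sin t / t| ≤ t⁻¹ := by
  rw [abs_div, abs_of_pos ht, div_le_iff₀ ht, inv_mul_cancel₀ ht.ne']
  exact Real.abs_sin_le_one t

lemma integrableOn_abs_sinc_pow {n : ℕ} (hn : 2 ≤ n) :
    IntegrableOn (fun t : ℝ => |Real.sin t / t|^n) (Ioi (0:ℝ)) := by
  have h1 : IntegrableOn (fun t : ℝ => |Real.sin t / t|^n) (Ioc (0:ℝ) 2) := by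
    apply Integrable.mono' (g := fun _ : ℝ => (1:ℝ))
    · exact integrableOn_const (by simp)
    · exact Measurable.aestronglyMeasurable (by fun_prop)
    · filter_upwards with t
      rw [Real.norm_eq_abs, abs_of_nonneg (by positivity)]
      exact pow_le_one₀ (abs_nonneg _) (abs_sinc_le_one t)
  have h2 : IntegrableOn (fun t : ℝ => |Real.sin t / t|^n) (Ioi (2:ℝ)) := by
    apply Integrable.mono' (integrableOn_inv_sq_Ioi two_pos)
    · exact Measurable.aestronglyMeasurable (by fun_prop)
    · filter_upwards [ae_restrict_mem measurableSet_Ioi] with t ht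
      have h2t : (0:ℝ) < 2 := two_pos
      have htpos : (0:ℝ) < t := lt_trans h2t (mem_Ioi.mp ht)
      rw [Real.norm_eq_abs, abs_of_nonneg (by positivity)]
      calc |Real.sin t / t|^n ≤ |Real.sin t / t|^2 := by
            apply pow_le_pow_of_le_one (abs_nonneg _) (_root_.abs_sinc_le_one t) hn
        _ ≤ (t⁻¹)^2 := by
            apply pow_le_pow_left₀ (abs_nonneg _) (abs_sinc_le_inv t htpos)
  have : Ioi (0:ℝ) = Ioc (0:ℝ) 2 ∪ Ioi 2 := (Ioc_union_Ioi_eq_Ioi two_pos.le).symm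
  rw [IntegrableOn, this]
  exact h1.union h2

lemma integrableOn_cos_sinc_pow {n : ℕ} (hn : 2 ≤ n) (c : ℝ) :
    IntegrableOn (fun t : ℝ => Real.cos (c*t) * (Real.sin t / t)^n) (Ioi (0:ℝ)) := by
  apply (integrableOn_abs_sinc_pow hn).mono'
  · exact Measurable.aestronglyMeasurable (by fun_prop)
  · filter_upwards with t
    rw [Real.norm_eq_abs, abs_mul, abs_pow]
    calc |Real.cos (c*t)| * |Real.sin t / t|^n ≤ 1 * |Real.sin t / t|^n :=
          mul_le_mul_of_nonneg_right (Real.abs_cos_le_one _) (by positivity)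
      _ = |Real.sin t / t|^n := one_mul _

lemma sincInt_rec {n : ℕ} (hn : 2 ≤ n) (x : ℝ) :
    ∫ τ : ℝ, sincInt n (x - τ) * unifDensity τ = sincInt (n+1) x := by
  have e1 : (fun τ : ℝ => sincInt n (x - τ) * unifDensity τ)
      = Set.indicator (Icc (-1:ℝ) 1) (fun τ => sincInt n (x - τ) * (1/2)) := by
    funext τ
    rw [unifDensity, Set.indicator_apply]
    split_ifs with h
    · rfl
    · rw [mul_zero]
  rw [e1, MeasureTheory.integral_indicator measurableSet_Icc]
  set μ := volume.restrict (Icc (-1:ℝ) 1) with hμ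
  set ν := volume.restrict (Ioi (0:ℝ)) with hν
  set F : ℝ → ℝ → ℝ := fun τ t => Real.cos ((x - τ)*t) * (Real.sin t / t)^n with hF
  have hFint : Integrable (Function.uncurry F) (μ.prod ν) := by
    have hbound1 : Integrable (fun _ : ℝ => (1:ℝ)) μ :=
      integrableOn_const (by simp)
    have hbound2 : Integrable (fun t : ℝ => |Real.sin t / t|^n) ν := integrableOn_abs_sinc_pow hn
    have hbound : Integrable (fun p : ℝ × ℝ =>
        (fun _ : ℝ => (1:ℝ)) p.1 * (fun t : ℝ => |Real.sin t / t|^n) p.2) (μ.prod ν) :=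
      Integrable.mul_prod (L := ℝ) hbound1 hbound2
    apply hbound.mono'
    · exact Measurable.aestronglyMeasurable (by fun_prop)
    · filter_upwards with p
      rw [Real.norm_eq_abs, one_mul]
      simp only [Function.uncurry, hF]
      rw [abs_mul, abs_pow]
      calc |Real.cos ((x - p.1)*p.2)| * |Real.sin p.2 / p.2|^n ≤ 1 * |Real.sin p.2 / p.2|^n :=
            mul_le_mul_of_nonneg_right (Real.abs_cos_le_one _) (by positivity)
        _ = |Real.sin p.2 / p.2|^n := one_mul _
  have hswap := MeasureTheory.integral_integral_swap hFint
  have hinner : ∀ t ∈ Ioi (0:ℝ),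
      ∫ τ, F τ t ∂μ = 2 * (Real.cos (x*t) * (Real.sin t / t)^(n+1)) := by
    intro t ht
    have htpos : 0 < t := mem_Ioi.mp ht
    have hcalc : ∫ τ in Icc (-1:ℝ) 1, Real.cos ((x - τ)*t)
        = (Real.sin ((x+1)*t) - Real.sin ((x-1)*t)) / t := by
      rw [MeasureTheory.integral_Icc_eq_integral_Ioc,
        ← intervalIntegral.integral_of_le (by norm_num : (-1:ℝ) ≤ 1)]
      have hderiv : ∀ τ ∈ uIcc (-1:ℝ) 1, HasDerivAt
          (fun τ : ℝ => -Real.sin ((x - τ)*t) / t) (Real.cos ((x - τ)*t)) τ := by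
        intro τ _
        have h1 : HasDerivAt (fun τ : ℝ => (x - τ)*t) (-t) τ := by
          have := ((hasDerivAt_id τ).const_sub x).mul_const t
          simpa using this
        have h2 := (Real.hasDerivAt_sin ((x - τ)*t)).comp τ h1
        have h3 := (h2.neg).div_const t
        refine h3.congr_deriv ?_
        field_simp
      rw [intervalIntegral.integral_eq_sub_of_hasDerivAt hderiv]
      · ring
      · apply Continuous.intervalIntegrable
        exact Real.continuous_cos.comp (((continuous_const.sub continuous_id).mul continuous_const))
    have htrig : Real.sin ((x+1)*t) - Real.sin ((x-1)*t) = 2 * Real.cos (x*t) * Real.sin t := by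
      have e1 : (x+1)*t = x*t + t := by ring
      have e2 : (x-1)*t = x*t - t := by ring
      rw [e1, e2, Real.sin_add, Real.sin_sub]
      ring
    have hmul : ∫ τ, F τ t ∂μ
        = (∫ τ in Icc (-1:ℝ) 1, Real.cos ((x - τ)*t)) * (Real.sin t / t)^n :=
      MeasureTheory.integral_mul_const _ _
    rw [hmul, hcalc, htrig, pow_succ]
    field_simp
  calc ∫ τ in Icc (-1:ℝ) 1, sincInt n (x - τ) * (1/2)
      = ∫ τ, (1/(2*π)) * ∫ t, F τ t ∂ν ∂μ := by
        apply integral_congr_ae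
        filter_upwards with τ
        rw [sincInt]
        ring
    _ = (1/(2*π)) * ∫ τ, ∫ t, F τ t ∂ν ∂μ := MeasureTheory.integral_const_mul _ _
    _ = (1/(2*π)) * ∫ t, ∫ τ, F τ t ∂μ ∂ν := by rw [hswap]
    _ = (1/(2*π)) * ∫ t in Ioi (0:ℝ), 2 * (Real.cos (x*t) * (Real.sin t / t)^(n+1)) := by
        rw [hν]
        congr 1
        exact setIntegral_congr_fun measurableSet_Ioi hinner
    _ = sincInt (n+1) x := by
        rw [MeasureTheory.integral_const_mul, sincInt]
        ring

lemma sumUnif_eq_sincInt : ∀ n : ℕ, 2 ≤ n → ∀ x : ℝ, sumUnifDensity n x = sincInt n x := by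
  intro n hn
  induction n, hn using Nat.le_induction with
  | base =>
    intro x
    rw [sumUnifDensity_two, max_eq_abs_form, sincInt, fejer_integral]
    field_simp
  | succ n hn ih =>
    intro x
    obtain ⟨m, rfl⟩ : ∃ m, n = m + 2 := ⟨n - 2, by omega⟩
    have h0 : sumUnifDensity (m + 3) x
        = ∫ τ : ℝ, sumUnifDensity (m + 2) (x - τ) * unifDensity τ := rfl
    rw [h0]
    have e : (fun τ : ℝ => sumUnifDensity (m + 2) (x - τ) * unifDensity τ)
        = fun τ : ℝ => sincInt (m + 2) (x - τ) * unifDensity τ := by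
      funext τ; rw [ih]
    rw [e]
    exact sincInt_rec (by omega) x

lemma half_pow_le {n : ℕ} (hn : 2 ≤ n) : ((1:ℝ)/2)^(n-1) ≤ 1 / Real.sqrt n := by
  have hn0 : (0:ℝ) < (n:ℝ) := by exact_mod_cast (by omega : 0 < n)
  have hs : (0:ℝ) < Real.sqrt n := Real.sqrt_pos.mpr hn0
  have hnat : n ≤ 2^n ∧ 2^n ≤ (2^(n-1))^2 := by
    constructor
    · exact (Nat.lt_two_pow_self (n := n)).le
    · rw [← pow_mul]
      apply Nat.pow_le_pow_right (by norm_num)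
      omega
  have h1 : (n:ℝ) ≤ ((2:ℝ)^(n-1))^2 := by
    calc (n:ℝ) ≤ ((2^n : ℕ) : ℝ) := by exact_mod_cast hnat.1
      _ ≤ (((2^(n-1))^2 : ℕ) : ℝ) := by exact_mod_cast hnat.2
      _ = ((2:ℝ)^(n-1))^2 := by push_cast; ring
  have h2 : Real.sqrt n ≤ (2:ℝ)^(n-1) := by
    have := Real.sqrt_le_sqrt h1
    rwa [Real.sqrt_sq (by positivity)] at this
  rw [div_pow, one_pow, div_le_div_iff₀ (by positivity) hs]
  calc 1 * Real.sqrt n = Real.sqrt n := one_mul _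
    _ ≤ (2:ℝ)^(n-1) := h2
    _ = 1 * 2^(n-1) := (one_mul _).symm

lemma integrableOn_inv_one_add_mul_sq {c : ℝ} (hc : 0 < c) (s : Set ℝ) :
    IntegrableOn (fun t : ℝ => (1 + c * t^2)⁻¹) s := by
  have hs : Real.sqrt c ≠ 0 := (Real.sqrt_pos.mpr hc).ne'
  have h : Integrable (fun t : ℝ => (1 + t^2)⁻¹) := integrable_inv_one_add_sq
  have h2 := h.comp_mul_left' hs
  have e : (fun t : ℝ => (1 + (Real.sqrt c * t)^2)⁻¹) = fun t : ℝ => (1 + c * t^2)⁻¹ := by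
    funext t
    rw [mul_pow, Real.sq_sqrt hc.le]
  rw [e] at h2
  exact h2.integrableOn

lemma bound_piece1 {n : ℕ} (hn : 2 ≤ n) :
    ∫ t in Ioc (0:ℝ) 2, |Real.sin t / t|^n ≤ π * Real.sqrt 6 / (2 * Real.sqrt n) := by
  have hn0 : (0:ℝ) < (n:ℝ) := by exact_mod_cast (by omega : 0 < n)
  have hc : (0:ℝ) < (n:ℝ)/6 := by positivity
  have hpt : ∀ t ∈ Ioc (0:ℝ) 2, |Real.sin t / t|^n ≤ (1 + (n:ℝ)/6 * t^2)⁻¹ := by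
    intro t ht
    have ht0 : 0 < t := ht.1
    have ht2 : t ≤ 2 := ht.2
    have hsin : 0 ≤ Real.sin t :=
      Real.sin_nonneg_of_nonneg_of_le_pi ht0.le (le_trans ht2 Real.two_le_pi)
    have habs : |Real.sin t / t| = Real.sin t / t := abs_of_nonneg (by positivity)
    have h1 : |Real.sin t / t| ≤ (1 + t^2/6)⁻¹ := by rw [habs]; exact sinc_le t ht0 ht2
    calc |Real.sin t / t|^n ≤ ((1 + t^2/6)⁻¹)^n := pow_le_pow_left₀ (abs_nonneg _) h1 n
      _ = ((1 + t^2/6)^n)⁻¹ := by rw [inv_pow]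
      _ ≤ (1 + (n:ℝ) * (t^2/6))⁻¹ := by
          apply inv_anti₀ (by positivity)
          exact one_add_mul_le_pow (by nlinarith [sq_nonneg t] : (-2:ℝ) ≤ t^2/6) n
      _ = (1 + (n:ℝ)/6 * t^2)⁻¹ := by ring_nf
  have hint1 : IntegrableOn (fun t : ℝ => |Real.sin t / t|^n) (Ioc (0:ℝ) 2) :=
    (integrableOn_abs_sinc_pow hn).mono_set Ioc_subset_Ioi_self
  have hint2 : IntegrableOn (fun t : ℝ => (1 + (n:ℝ)/6 * t^2)⁻¹) (Ioc (0:ℝ) 2) :=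
    integrableOn_inv_one_add_mul_sq hc _
  calc ∫ t in Ioc (0:ℝ) 2, |Real.sin t / t|^n
      ≤ ∫ t in Ioc (0:ℝ) 2, (1 + (n:ℝ)/6 * t^2)⁻¹ :=
        setIntegral_mono_on hint1 hint2 measurableSet_Ioc hpt
    _ ≤ ∫ t in Ioi (0:ℝ), (1 + (n:ℝ)/6 * t^2)⁻¹ := by
        apply setIntegral_mono_set (integrableOn_inv_one_add_mul_sq hc _)
        · filter_upwards with t
          positivity
        · exact HasSubset.Subset.eventuallyLE Ioc_subset_Ioi_self
    _ = π / (2 * Real.sqrt ((n:ℝ)/6)) := integral_inv_one_add_mul_sq hc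
    _ = π * Real.sqrt 6 / (2 * Real.sqrt n) := by
        rw [Real.sqrt_div hn0.le 6]
        have h6 : (0:ℝ) < Real.sqrt 6 := Real.sqrt_pos.mpr (by norm_num)
        have hsn : (0:ℝ) < Real.sqrt n := Real.sqrt_pos.mpr hn0
        field_simp

lemma bound_piece2 {n : ℕ} (hn : 2 ≤ n) :
    ∫ t in Ioi (2:ℝ), |Real.sin t / t|^n ≤ ((1:ℝ)/2)^(n-1) := by
  have hpt : ∀ t ∈ Ioi (2:ℝ), |Real.sin t / t|^n ≤ ((1:ℝ)/2)^(n-2) * (t⁻¹)^2 := by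
    intro t ht
    have ht2 : (2:ℝ) < t := mem_Ioi.mp ht
    have ht0 : (0:ℝ) < t := by linarith
    calc |Real.sin t / t|^n ≤ (t⁻¹)^n := pow_le_pow_left₀ (abs_nonneg _) (abs_sinc_le_inv t ht0) n
      _ = (t⁻¹)^(n-2) * (t⁻¹)^2 := by rw [← pow_add]; congr 1; omega
      _ ≤ ((1:ℝ)/2)^(n-2) * (t⁻¹)^2 := by
          apply mul_le_mul_of_nonneg_right _ (by positivity)
          apply pow_le_pow_left₀ (by positivity)
          rw [one_div]
          exact inv_anti₀ two_pos ht2.le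
  have hint1 : IntegrableOn (fun t : ℝ => |Real.sin t / t|^n) (Ioi (2:ℝ)) :=
    (integrableOn_abs_sinc_pow hn).mono_set (Ioi_subset_Ioi (by norm_num))
  have hint2 : IntegrableOn (fun t : ℝ => ((1:ℝ)/2)^(n-2) * (t⁻¹)^2) (Ioi (2:ℝ)) :=
    (integrableOn_inv_sq_Ioi two_pos).const_mul _
  calc ∫ t in Ioi (2:ℝ), |Real.sin t / t|^n
      ≤ ∫ t in Ioi (2:ℝ), ((1:ℝ)/2)^(n-2) * (t⁻¹)^2 :=
        setIntegral_mono_on hint1 hint2 measurableSet_Ioi hpt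
    _ = ((1:ℝ)/2)^(n-2) * ∫ t in Ioi (2:ℝ), (t⁻¹)^2 := MeasureTheory.integral_const_mul _ _
    _ = ((1:ℝ)/2)^(n-2) * (1/2) := by rw [integral_inv_sq_Ioi_two]
    _ = ((1:ℝ)/2)^(n-1) := by
        rw [← pow_succ]
        congr 1
        omega

lemma sincInt_bound {n : ℕ} (hn : 2 ≤ n) (x : ℝ) : sincInt n x ≤ 3 / Real.sqrt n := by
  have hn0 : (0:ℝ) < (n:ℝ) := by exact_mod_cast (by omega : 0 < n)
  have hs : (0:ℝ) < Real.sqrt n := Real.sqrt_pos.mpr hn0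
  have hπ : (0:ℝ) < π := Real.pi_pos
  -- |integral| ≤ ∫ |sinc|^n
  have habs : ‖∫ t in Ioi (0:ℝ), Real.cos (x*t) * (Real.sin t / t)^n‖
      ≤ ∫ t in Ioi (0:ℝ), |Real.sin t / t|^n := by
    apply MeasureTheory.norm_integral_le_of_norm_le (integrableOn_abs_sinc_pow hn)
    filter_upwards with t
    rw [Real.norm_eq_abs, abs_mul, abs_pow]
    calc |Real.cos (x*t)| * |Real.sin t / t|^n ≤ 1 * |Real.sin t / t|^n :=
          mul_le_mul_of_nonneg_right (Real.abs_cos_le_one _) (by positivity)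
      _ = |Real.sin t / t|^n := one_mul _
  -- split the integral
  have hsplit : ∫ t in Ioi (0:ℝ), |Real.sin t / t|^n
      = (∫ t in Ioc (0:ℝ) 2, |Real.sin t / t|^n) + ∫ t in Ioi (2:ℝ), |Real.sin t / t|^n := by
    rw [← MeasureTheory.setIntegral_union (Ioc_disjoint_Ioi le_rfl) measurableSet_Ioi
      ((integrableOn_abs_sinc_pow hn).mono_set Ioc_subset_Ioi_self)
      ((integrableOn_abs_sinc_pow hn).mono_set (Ioi_subset_Ioi (by norm_num)))]
    rw [Ioc_union_Ioi_eq_Ioi two_pos.le]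
  have hS : ∫ t in Ioi (0:ℝ), |Real.sin t / t|^n
      ≤ π * Real.sqrt 6 / (2 * Real.sqrt n) + 1 / Real.sqrt n := by
    rw [hsplit]
    have := half_pow_le hn
    linarith [bound_piece1 hn, bound_piece2 hn]
  have hIle : ∫ t in Ioi (0:ℝ), Real.cos (x*t) * (Real.sin t / t)^n
      ≤ π * Real.sqrt 6 / (2 * Real.sqrt n) + 1 / Real.sqrt n := by
    calc ∫ t in Ioi (0:ℝ), Real.cos (x*t) * (Real.sin t / t)^n
        ≤ ‖∫ t in Ioi (0:ℝ), Real.cos (x*t) * (Real.sin t / t)^n‖ := le_norm_self _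
      _ ≤ ∫ t in Ioi (0:ℝ), |Real.sin t / t|^n := habs
      _ ≤ _ := hS
  rw [sincInt]
  have h6 : Real.sqrt 6 ≤ 3 := by
    have h9 : Real.sqrt 9 = 3 := by
      rw [show (9:ℝ) = 3^2 by norm_num, Real.sqrt_sq (by norm_num)]
    rw [← h9]
    exact Real.sqrt_le_sqrt (by norm_num)
  have hπ2 : (2:ℝ) ≤ π := Real.two_le_pi
  calc (1/π) * ∫ t in Ioi (0:ℝ), Real.cos (x*t) * (Real.sin t / t)^n
      ≤ (1/π) * (π * Real.sqrt 6 / (2 * Real.sqrt n) + 1 / Real.sqrt n) := by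
        apply mul_le_mul_of_nonneg_left hIle (by positivity)
    _ = Real.sqrt 6 / (2 * Real.sqrt n) + 1 / (π * Real.sqrt n) := by
        field_simp
    _ ≤ 3 / (2 * Real.sqrt n) + 1 / (2 * Real.sqrt n) := by
        apply add_le_add
        · exact div_le_div_of_nonneg_right h6 (by positivity)
        · apply one_div_le_one_div_of_le (by positivity)
          exact mul_le_mul_of_nonneg_right hπ2 hs.le
    _ ≤ 3 / Real.sqrt n := by
        rw [← add_div]
        rw [div_le_div_iff₀ (by positivity) hs]
        ring_nf
        nlinarith [hs]

theorem sumUnifDensity_upper :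
    ∃ cu : ℝ, 0 < cu ∧ ∀ n : ℕ, 1 ≤ n → ∀ x : ℝ,
      sumUnifDensity n x ≤ cu / Real.sqrt n := by
  refine ⟨3, by norm_num, ?_⟩
  intro n hn x
  rcases eq_or_lt_of_le hn with h1 | h2
  · rw [← h1]
    have : sumUnifDensity 1 x = unifDensity x := rfl
    rw [this, unifDensity]
    have : Real.sqrt (1:ℕ) = 1 := by norm_num [Real.sqrt_one]
    rw [this]
    split_ifs <;> norm_num
  · rw [sumUnif_eq_sincInt n h2 x]
    exact sincInt_bound h2 x
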